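/- Let τ = (1+√5)/2 and let W_a, W_b be nonempty compact subsets of ℝ satisfying W_a = τ⁻²·W_a ∪ τ⁻²·(W_a − τ) ∪ τ⁻²·(W_b + τ²) and W_b = τ⁻²·(W_a − 2τ) ∪ τ⁻²·W_b. Then W_a and W_b are perfect and topologically regular sets: each is equal to the closure of its interior, and neither has any isolated points. -/

import Mathlib

open EMetric Set Filter Topology
open scoped ENNReal NNReal

set_option maxHeartbeats 1000000

lemma scale_step {c d x y : ℝ} (hc : 0 < c) {S T : Set ℝ}
    (h : ∀ w ∈ S, c * w + d ∈ T) (hxy : x = c * y + d) :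
    EMetric.infEdist x T ≤ ENNReal.ofReal c * EMetric.infEdist y S := by
  rcases S.eq_empty_or_nonempty with rfl | hS
  · rw [show EMetric.infEdist y (∅ : Set ℝ) = ⊤ from EMetric.infEdist_empty, ENNReal.mul_top]
    · exact le_top
    · exact (ENNReal.ofReal_pos.mpr hc).ne'
  · apply ENNReal.le_of_forall_pos_le_add
    intro ε hε hlt
    have hfin : EMetric.infEdist y S ≠ ⊤ := by
      intro htop
      rw [htop, ENNReal.mul_top (ENNReal.ofReal_pos.mpr hc).ne'] at hlt
      exact (lt_irrefl _ hlt).elim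
    have hδ : (0:ℝ) < (ε : ℝ) / c := div_pos (by exact_mod_cast hε) hc
    have hlt2 : EMetric.infEdist y S < EMetric.infEdist y S + ENNReal.ofReal ((ε : ℝ)/c) :=
      ENNReal.lt_add_right hfin (ENNReal.ofReal_pos.mpr hδ).ne'
    obtain ⟨w, hwS, hw⟩ := EMetric.infEdist_lt_iff.mp hlt2
    have hxw : EMetric.infEdist x T ≤ edist x (c*w + d) :=
      EMetric.infEdist_le_edist_of_mem (h w hwS)
    have hed : edist x (c*w+d) = ENNReal.ofReal c * edist y w := by
      rw [edist_dist, edist_dist, Real.dist_eq, Real.dist_eq, hxy,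
        show c*y+d-(c*w+d) = c*(y-w) from by ring, abs_mul, abs_of_pos hc,
        ENNReal.ofReal_mul hc.le]
    calc EMetric.infEdist x T ≤ ENNReal.ofReal c * edist y w := hxw.trans_eq hed
      _ ≤ ENNReal.ofReal c * (EMetric.infEdist y S + ENNReal.ofReal ((ε:ℝ)/c)) :=
          mul_le_mul_right hw.le _
      _ = ENNReal.ofReal c * EMetric.infEdist y S + ENNReal.ofReal c * ENNReal.ofReal ((ε:ℝ)/c) := by
          rw [mul_add]
      _ ≤ ENNReal.ofReal c * EMetric.infEdist y S + ε := by
          refine add_le_add_right ?_ _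
          rw [← ENNReal.ofReal_mul hc.le, mul_div_cancel₀ _ hc.ne']
          exact le_of_eq ENNReal.ofReal_coe_nnreal

lemma mem_of_le_geom {U : Set ℝ} (hU : IsClosed U) {x : ℝ} {L C : ℝ≥0∞} (hL : L < 1)
    (hC : C ≠ ⊤) (h : ∀ n : ℕ, EMetric.infEdist x U ≤ L^n * C) : x ∈ U := by
  rw [EMetric.mem_iff_infEdist_zero_of_closed hU]
  refine le_antisymm ?_ (zero_le)
  have ht : Tendsto (fun n : ℕ => L^n * C) atTop (𝓝 (0 * C)) :=
    ENNReal.Tendsto.mul_const (ENNReal.tendsto_pow_atTop_nhds_zero_of_lt_one hL) (Or.inr hC)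
  rw [zero_mul] at ht
  exact ge_of_tendsto' ht h

lemma img_step {c e : ℝ} (hc : 0 < c) {S T : Set ℝ}
    (h : ∀ w ∈ S, c * w + e ∈ T) :
    ∀ v ∈ closure (interior S), c * v + e ∈ closure (interior T) := by
  intro v hv
  have hom : IsOpenMap (fun z : ℝ => c * z + e) := by
    have := ((Homeomorph.mulLeft₀ c hc.ne').trans (Homeomorph.addRight e)).isOpenMap
    exact this
  have hcont : Continuous fun z : ℝ => c * z + e := by continuity
  have h1 : (fun z : ℝ => c*z+e) '' interior S ⊆ interior T :=
    interior_maximal (by rintro _ ⟨w, hw, rfl⟩; exact h w (interior_subset hw))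
      (hom _ isOpen_interior)
  have h2 : c * v + e ∈ (fun z : ℝ => c*z+e) '' closure (interior S) := ⟨v, hv, rfl⟩
  exact closure_mono h1 (image_closure_subset_closure_image hcont h2)

lemma perfect_of_reg {C : Set ℝ} (hcl : IsClosed C) (hreg : closure (interior C) = C) :
    Perfect C := by
  refine ⟨hcl, fun x hx => ?_⟩
  rw [accPt_iff_nhds]
  intro U hU
  have hx' : x ∈ closure (interior C) := hreg.symm ▸ hx
  rcases mem_closure_iff_nhds.mp hx' U hU with ⟨y, hyU, hyint⟩
  by_cases hxy : y = x
  · subst hxy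
    have hV : interior U ∩ interior C ∈ 𝓝 y :=
      Filter.inter_mem (interior_mem_nhds.mpr hU) (isOpen_interior.mem_nhds hyint)
    have : (interior U ∩ interior C) ∩ {y}ᶜ ∈ 𝓝[≠] y :=
      Filter.inter_mem (mem_nhdsWithin_of_mem_nhds hV) self_mem_nhdsWithin
    obtain ⟨z, ⟨hz1, hz2⟩, hz3⟩ := Filter.nonempty_of_mem this
    exact ⟨z, ⟨interior_subset hz1, interior_subset hz2⟩, hz3⟩
  · exact ⟨y, ⟨hyU, interior_subset hyint⟩, hxy⟩

/-- The windows of the substitution ρ̃ = (a ↦ aab, b ↦ ba) are perfect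
(closed with no isolated points) and topologically regular (equal to the
closure of their interior). -/
theorem rho_tilde_windows_perfect_regular (τ : ℝ) (hτ : τ = (1 + Real.sqrt 5) / 2)
    (Wa Wb : Set ℝ) (hWa : Wa.Nonempty) (hWb : Wb.Nonempty)
    (hca : IsCompact Wa) (hcb : IsCompact Wb)
    (h1 : Wa = (fun x : ℝ => (τ ^ 2)⁻¹ * x) '' Wa ∪
               (fun x : ℝ => (τ ^ 2)⁻¹ * (x - τ)) '' Wa ∪
               (fun x : ℝ => (τ ^ 2)⁻¹ * (x + τ ^ 2)) '' Wb)
    (h2 : Wb = (fun x : ℝ => (τ ^ 2)⁻¹ * (x - 2 * τ)) '' Wa ∪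
               (fun x : ℝ => (τ ^ 2)⁻¹ * x) '' Wb) :
    closure (interior Wa) = Wa ∧ closure (interior Wb) = Wb ∧
    Perfect Wa ∧ Perfect Wb := by
  have hs5 : Real.sqrt 5 ^ 2 = 5 := Real.sq_sqrt (by norm_num)
  have hs0 : 0 ≤ Real.sqrt 5 := Real.sqrt_nonneg 5
  have hsl : 2.231 < Real.sqrt 5 := by nlinarith
  have hsu : Real.sqrt 5 < 2.24 := by nlinarith
  have hq : τ^2 = τ + 1 := by rw [hτ]; linear_combination hs5/4
  have htl : 1.6155 < τ := by rw [hτ]; linarith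
  have htu : τ < 1.62 := by rw [hτ]; linarith
  have hpos : (0:ℝ) < 2 - τ := by linarith
  have hinv : (τ^2)⁻¹ = 2 - τ :=
    inv_eq_of_mul_eq_one_right (by linear_combination (1-τ)*hq)
  simp only [hinv] at h1 h2
  -- basic one-step membership facts
  have P1 : ∀ v ∈ Wa, (2-τ)*v ∈ Wa := by
    intro v hv; rw [h1]; exact Or.inl (Or.inl ⟨v, hv, rfl⟩)
  have P2 : ∀ v ∈ Wa, (2-τ)*(v-τ) ∈ Wa := by
    intro v hv; rw [h1]; exact Or.inl (Or.inr ⟨v, hv, rfl⟩)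
  have P3 : ∀ v ∈ Wb, (2-τ)*(v+τ^2) ∈ Wa := by
    intro v hv; rw [h1]; exact Or.inr ⟨v, hv, rfl⟩
  have P4 : ∀ v ∈ Wa, (2-τ)*(v-2*τ) ∈ Wb := by
    intro v hv; rw [h2]; exact Or.inl ⟨v, hv, rfl⟩
  have P5 : ∀ v ∈ Wb, (2-τ)*v ∈ Wb := by
    intro v hv; rw [h2]; exact Or.inr ⟨v, hv, rfl⟩
  -- boundedness
  obtain ⟨M, hM⟩ := isBounded_iff_forall_norm_le.mp (hca.union hcb).isBounded
  obtain ⟨wa, hwa⟩ := hWa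
  have hMwa : |wa| ≤ M := by simpa [Real.norm_eq_abs] using hM wa (Or.inl hwa)
  have hM0 : 0 ≤ M := le_trans (abs_nonneg wa) hMwa
  have hCC : (ENNReal.ofReal (2*M+4)) ≠ ⊤ := ENNReal.ofReal_ne_top
  have hL1 : ENNReal.ofReal (2-τ) < 1 := ENNReal.ofReal_lt_one.mpr (by linarith)
  -- constants
  have hc1 : (2-τ)*(τ-1) = 2*τ-3 := by linear_combination -hq
  have hc2 : (2-τ)*(2-τ) = 5-3*τ := by linear_combination hq
  -- the four covering sets
  set U0 : Set ℝ := {z : ℝ | z - (τ-1) ∈ Wa} ∪ {z : ℝ | z - (τ-1) ∈ Wb} with hU0def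
  set U1 : Set ℝ := Wa ∪ {z : ℝ | z - τ ∈ Wb} with hU1def
  set U2 : Set ℝ := ({z : ℝ | z - (1-τ) ∈ Wa} ∪ {z : ℝ | z - 1 ∈ Wa}) ∪ {z : ℝ | z - 1 ∈ Wb}
    with hU2def
  set U3 : Set ℝ := Wa ∪ {z : ℝ | z - 1 ∈ Wa} with hU3def
  -- covering transfer facts
  have cov01 : ∀ w ∈ U1, (2-τ)*w + 0 ∈ U0 := by
    intro w hw; rw [hU1def] at hw; rw [hU0def]
    rcases hw with hw | hw
    · left
      show (2-τ)*w + 0 - (τ-1) ∈ Wa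
      rw [show (2-τ)*w + 0 - (τ-1) = (2-τ)*(w - τ) from by linear_combination -hq]
      exact P2 w hw
    · right
      show (2-τ)*w + 0 - (τ-1) ∈ Wb
      rw [show (2-τ)*w + 0 - (τ-1) = (2-τ)*(w - τ) from by linear_combination -hq]
      exact P5 (w - τ) hw
  have cov02 : ∀ w ∈ U2, (2-τ)*w + (2*τ-3) ∈ U0 := by
    intro w hw; rw [hU2def] at hw; rw [hU0def]
    rcases hw with (hw | hw) | hw
    · left
      show (2-τ)*w + (2*τ-3) - (τ-1) ∈ Wa
      rw [show (2-τ)*w + (2*τ-3) - (τ-1) = (2-τ)*((w - (1-τ)) - τ) from by ring]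
      exact P2 _ hw
    · left
      show (2-τ)*w + (2*τ-3) - (τ-1) ∈ Wa
      rw [show (2-τ)*w + (2*τ-3) - (τ-1) = (2-τ)*(w-1) from by ring]
      exact P1 _ hw
    · right
      show (2-τ)*w + (2*τ-3) - (τ-1) ∈ Wb
      rw [show (2-τ)*w + (2*τ-3) - (τ-1) = (2-τ)*(w-1) from by ring]
      exact P5 _ hw
  have cov03 : ∀ w ∈ U0, (2-τ)*w + (2-τ) ∈ U0 := by
    intro w hw; rw [hU0def] at hw; rw [hU0def]
    rcases hw with hw | hw
    · left
      show (2-τ)*w + (2-τ) - (τ-1) ∈ Wa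
      rw [show (2-τ)*w + (2-τ) - (τ-1) = (2-τ)*(w-(τ-1)) from by linear_combination -hq]
      exact P1 _ hw
    · right
      show (2-τ)*w + (2-τ) - (τ-1) ∈ Wb
      rw [show (2-τ)*w + (2-τ) - (τ-1) = (2-τ)*(w-(τ-1)) from by linear_combination -hq]
      exact P5 _ hw
  have cov11 : ∀ w ∈ U3, (2-τ)*w + 0 ∈ U1 := by
    intro w hw; rw [hU3def] at hw; rw [hU1def]
    rcases hw with hw | hw
    · left
      rw [show (2-τ)*w + 0 = (2-τ)*w from by ring]
      exact P1 _ hw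
    · right
      show (2-τ)*w + 0 - τ ∈ Wb
      rw [show (2-τ)*w + 0 - τ = (2-τ)*((w-1) - 2*τ) from by linear_combination (-2:ℝ)*hq]
      exact P4 _ hw
  have cov12 : ∀ w ∈ U1, (2-τ)*w + (2-τ) ∈ U1 := by
    intro w hw; rw [hU1def] at hw; rw [hU1def]
    rcases hw with hw | hw
    · right
      show (2-τ)*w + (2-τ) - τ ∈ Wb
      rw [show (2-τ)*w + (2-τ) - τ = (2-τ)*(w - 2*τ) from by linear_combination (-2:ℝ)*hq]
      exact P4 _ hw
    · left
      rw [show (2-τ)*w + (2-τ) = (2-τ)*((w-τ) + τ^2) from by linear_combination (τ-2)*hq]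
      exact P3 _ hw
  have cov21 : ∀ w ∈ U2, (2-τ)*w + 0 ∈ U2 := by
    intro w hw; rw [hU2def] at hw; rw [hU2def]
    rcases hw with (hw | hw) | hw
    · right
      show (2-τ)*w + 0 - 1 ∈ Wb
      rw [show (2-τ)*w + 0 - 1 = (2-τ)*((w - (1-τ)) - 2*τ) from by linear_combination -hq]
      exact P4 _ hw
    · left; right
      show (2-τ)*w + 0 - 1 ∈ Wa
      rw [show (2-τ)*w + 0 - 1 = (2-τ)*((w-1) - τ) from by linear_combination -hq]
      exact P2 _ hw
    · left; left
      show (2-τ)*w + 0 - (1-τ) ∈ Wa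
      rw [show (2-τ)*w + 0 - (1-τ) = (2-τ)*((w-1) + τ^2) from by linear_combination (τ-1)*hq]
      exact P3 _ hw
  have cov22 : ∀ w ∈ U0, (2-τ)*w + (5-3*τ) ∈ U2 := by
    intro w hw; rw [hU0def] at hw; rw [hU2def]
    rcases hw with hw | hw
    · left; right
      show (2-τ)*w + (5-3*τ) - 1 ∈ Wa
      rw [show (2-τ)*w + (5-3*τ) - 1 = (2-τ)*((w-(τ-1)) - τ) from by linear_combination (-2:ℝ)*hq]
      exact P2 _ hw
    · left; left
      show (2-τ)*w + (5-3*τ) - (1-τ) ∈ Wa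
      rw [show (2-τ)*w + (5-3*τ) - (1-τ) = (2-τ)*((w-(τ-1)) + τ^2) from by
        linear_combination (τ-2)*hq]
      exact P3 _ hw
  have cov31 : ∀ w ∈ U3, (2-τ)*w + 0 ∈ U3 := by
    intro w hw; rw [hU3def] at hw; rw [hU3def]
    rcases hw with hw | hw
    · left
      rw [show (2-τ)*w + 0 = (2-τ)*w from by ring]
      exact P1 _ hw
    · right
      show (2-τ)*w + 0 - 1 ∈ Wa
      rw [show (2-τ)*w + 0 - 1 = (2-τ)*((w-1) - τ) from by linear_combination -hq]
      exact P2 _ hw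
  have cov32 : ∀ w ∈ U1, (2-τ)*w + (2-τ) ∈ U3 := by
    intro w hw; rw [hU1def] at hw; rw [hU3def]
    rcases hw with hw | hw
    · right
      show (2-τ)*w + (2-τ) - 1 ∈ Wa
      rw [show (2-τ)*w + (2-τ) - 1 = (2-τ)*(w - τ) from by linear_combination -hq]
      exact P2 _ hw
    · left
      rw [show (2-τ)*w + (2-τ) = (2-τ)*((w-τ) + τ^2) from by linear_combination (τ-2)*hq]
      exact P3 _ hw
  have cov33 : ∀ w ∈ U2, (2-τ)*w + (τ-1) ∈ U3 := by
    intro w hw; rw [hU2def] at hw; rw [hU3def]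
    rcases hw with (hw | hw) | hw
    · right
      show (2-τ)*w + (τ-1) - 1 ∈ Wa
      rw [show (2-τ)*w + (τ-1) - 1 = (2-τ)*((w - (1-τ)) - τ) from by ring]
      exact P2 _ hw
    · right
      show (2-τ)*w + (τ-1) - 1 ∈ Wa
      rw [show (2-τ)*w + (τ-1) - 1 = (2-τ)*(w-1) from by ring]
      exact P1 _ hw
    · left
      rw [show (2-τ)*w + (τ-1) = (2-τ)*((w-1) + τ^2) from by linear_combination (τ-1)*hq]
      exact P3 _ hw
  have cov34 : ∀ w ∈ U0, (2-τ)*w + (4-2*τ) ∈ U3 := by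
    intro w hw; rw [hU0def] at hw; rw [hU3def]
    rcases hw with hw | hw
    · right
      show (2-τ)*w + (4-2*τ) - 1 ∈ Wa
      rw [show (2-τ)*w + (4-2*τ) - 1 = (2-τ)*(w-(τ-1)) from by linear_combination -hq]
      exact P1 _ hw
    · left
      rw [show (2-τ)*w + (4-2*τ) = (2-τ)*((w-(τ-1)) + τ^2) from by linear_combination (τ-2)*hq]
      exact P3 _ hw
  -- the main contraction estimate for the four covering claims
  have key : ∀ n : ℕ, ∀ x : ℝ,
      (x ∈ Icc (0:ℝ) (τ-1) → EMetric.infEdist x U0 ≤ (ENNReal.ofReal (2-τ))^n * ENNReal.ofReal (2*M+4)) ∧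
      (x ∈ Icc (0:ℝ) (τ-1) → EMetric.infEdist x U1 ≤ (ENNReal.ofReal (2-τ))^n * ENNReal.ofReal (2*M+4)) ∧
      (x ∈ Icc (0:ℝ) (2-τ) → EMetric.infEdist x U2 ≤ (ENNReal.ofReal (2-τ))^n * ENNReal.ofReal (2*M+4)) ∧
      (x ∈ Icc (0:ℝ) 1 → EMetric.infEdist x U3 ≤ (ENNReal.ofReal (2-τ))^n * ENNReal.ofReal (2*M+4)) := by
    intro n
    induction n with
    | zero =>
      intro x
      have hb := abs_le.mp hMwa
      have base : ∀ (z : ℝ) (U : Set ℝ), z ∈ U → |z - wa| ≤ 2 → x ∈ Icc (0:ℝ) 1 →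
          EMetric.infEdist x U ≤ (ENNReal.ofReal (2-τ))^0 * ENNReal.ofReal (2*M+4) := by
        intro z U hz hzb hx
        rw [pow_zero, one_mul]
        refine le_trans (EMetric.infEdist_le_edist_of_mem hz) ?_
        rw [edist_dist, Real.dist_eq]
        apply ENNReal.ofReal_le_ofReal
        have hzb' := abs_le.mp hzb
        rw [abs_le]
        constructor
        · linarith [hx.1, hb.1, hb.2, hzb'.1, hzb'.2, hM0]
        · linarith [hx.2, hb.1, hb.2, hzb'.1, hzb'.2, hM0]
      refine ⟨?_, ?_, ?_, ?_⟩ <;> intro hx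
      · refine base (wa + (τ-1)) U0 ?_ (by rw [abs_le]; constructor <;> linarith)
          ⟨hx.1, by linarith [hx.2]⟩
        rw [hU0def]; left; show wa + (τ-1) - (τ-1) ∈ Wa
        rw [show wa + (τ-1) - (τ-1) = wa from by ring]; exact hwa
      · refine base wa U1 ?_ (by rw [abs_le]; constructor <;> linarith)
          ⟨hx.1, by linarith [hx.2]⟩
        rw [hU1def]; left; exact hwa
      · refine base (wa + 1) U2 ?_ (by rw [abs_le]; constructor <;> linarith)
          ⟨hx.1, by linarith [hx.2]⟩
        rw [hU2def]; left; right; show wa + 1 - 1 ∈ Wa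
        rw [show wa + 1 - 1 = wa from by ring]; exact hwa
      · refine base wa U3 ?_ (by rw [abs_le]; constructor <;> linarith) hx
        rw [hU3def]; left; exact hwa
    | succ n ih =>
      intro x
      have edge : ∀ (a LJ : ℝ) (Uj Ui : Set ℝ), 0 ≤ x - a → x - a ≤ (2-τ)*LJ →
          (∀ w ∈ Uj, (2-τ)*w + a ∈ Ui) →
          (∀ y ∈ Icc (0:ℝ) LJ, EMetric.infEdist y Uj ≤ (ENNReal.ofReal (2-τ))^n * ENNReal.ofReal (2*M+4)) →
          EMetric.infEdist x Ui ≤ (ENNReal.ofReal (2-τ))^(n+1) * ENNReal.ofReal (2*M+4) := by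
        intro a LJ Uj Ui h0 h1' hcov hIH
        have hy : (x - a)/(2-τ) ∈ Icc (0:ℝ) LJ :=
          ⟨div_nonneg h0 hpos.le, by rw [div_le_iff₀ hpos]; linarith⟩
        calc EMetric.infEdist x Ui
            ≤ ENNReal.ofReal (2-τ) * EMetric.infEdist ((x-a)/(2-τ)) Uj :=
              scale_step hpos hcov (by field_simp; ring)
          _ ≤ ENNReal.ofReal (2-τ) * ((ENNReal.ofReal (2-τ))^n * ENNReal.ofReal (2*M+4)) :=
              mul_le_mul_right (hIH _ hy) _
          _ = (ENNReal.ofReal (2-τ))^(n+1) * ENNReal.ofReal (2*M+4) := by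
              rw [pow_succ]; ring
      refine ⟨?_, ?_, ?_, ?_⟩ <;> intro hx
      · rcases le_or_gt x (2*τ-3) with hsp | hsp
        · exact edge 0 (τ-1) U1 U0 (by linarith [hx.1]) (by rw [mul_comm] at hc1 ⊢; linarith [hc1])
            cov01 (fun y hy => (ih y).2.1 hy)
        · rcases le_or_gt x (2-τ) with hsp2 | hsp2
          · exact edge (2*τ-3) (2-τ) U2 U0 (by linarith) (by linarith [hc2]) cov02
              (fun y hy => (ih y).2.2.1 hy)
          · exact edge (2-τ) (τ-1) U0 U0 (by linarith) (by linarith [hc1, hx.2]) cov03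
              (fun y hy => (ih y).1 hy)
      · rcases le_or_gt x (2-τ) with hsp | hsp
        · exact edge 0 1 U3 U1 (by linarith [hx.1]) (by linarith) cov11
            (fun y hy => (ih y).2.2.2 hy)
        · exact edge (2-τ) (τ-1) U1 U1 (by linarith) (by linarith [hc1, hx.2]) cov12
            (fun y hy => (ih y).2.1 hy)
      · rcases le_or_gt x (5-3*τ) with hsp | hsp
        · exact edge 0 (2-τ) U2 U2 (by linarith [hx.1]) (by linarith [hc2]) cov21
            (fun y hy => (ih y).2.2.1 hy)
        · exact edge (5-3*τ) (τ-1) U0 U2 (by linarith) (by linarith [hc1, hx.2]) cov22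
            (fun y hy => (ih y).1 hy)
      · rcases le_or_gt x (2-τ) with hsp | hsp
        · exact edge 0 1 U3 U3 (by linarith [hx.1]) (by linarith) cov31
            (fun y hy => (ih y).2.2.2 hy)
        · rcases le_or_gt x (τ-1) with hsp2 | hsp2
          · exact edge (2-τ) (τ-1) U1 U3 (by linarith) (by linarith [hc1]) cov32
              (fun y hy => (ih y).2.1 hy)
          · rcases le_or_gt x (4-2*τ) with hsp3 | hsp3
            · exact edge (τ-1) (2-τ) U2 U3 (by linarith) (by linarith [hc2]) cov33
                (fun y hy => (ih y).2.2.1 hy)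
            · exact edge (4-2*τ) (τ-1) U0 U3 (by linarith) (by linarith [hc1, hx.2]) cov34
                (fun y hy => (ih y).1 hy)
  -- closedness of U0
  have hU0closed : IsClosed U0 := by
    rw [hU0def]
    exact IsClosed.union
      (IsClosed.preimage (continuous_id.sub continuous_const) hca.isClosed)
      (IsClosed.preimage (continuous_id.sub continuous_const) hcb.isClosed)
  -- the key covering: [1-τ, 0] ⊆ Wa ∪ Wb
  have hK : ∀ x ∈ Icc (1-τ) (0:ℝ), x ∈ Wa ∪ Wb := by
    intro x hx
    have hx' : x + (τ-1) ∈ Icc (0:ℝ) (τ-1) := ⟨by linarith [hx.1], by linarith [hx.2]⟩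
    have hmem : x + (τ-1) ∈ U0 :=
      mem_of_le_geom hU0closed hL1 hCC (fun n => (key n _).1 hx')
    rw [hU0def] at hmem
    rcases hmem with hm | hm
    · left
      have hmm : x + (τ-1) - (τ-1) ∈ Wa := hm
      rwa [show x + (τ-1) - (τ-1) = x from by ring] at hmm
    · right
      have hmm : x + (τ-1) - (τ-1) ∈ Wb := hm
      rwa [show x + (τ-1) - (τ-1) = x from by ring] at hmm
  -- the interval J ⊆ Wa
  have hJ : Icc (11-7*τ) (3-2*τ) ⊆ Wa := by
    intro x hx
    have h3τ : (0:ℝ) ≤ 3*τ+2 := by linarith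
    have hz : (3*τ+2)*x + τ ∈ Icc (1-τ) (0:ℝ) := by
      constructor
      · linarith [hq, mul_le_mul_of_nonneg_left hx.1 h3τ]
      · linarith [hq, mul_le_mul_of_nonneg_left hx.2 h3τ]
    rcases hK _ hz with hza | hzb
    · have hm := P1 _ (P2 _ hza)
      rwa [show (2-τ)*((2-τ)*(((3*τ+2)*x + τ) - τ)) = x from by
        linear_combination ((3*τ-7)*x)*hq] at hm
    · have hm := P2 _ (P3 _ hzb)
      rwa [show (2-τ)*(((2-τ)*(((3*τ+2)*x + τ) + τ^2)) - τ) = x from by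
        linear_combination ((3*τ-7)*x + τ^2 - 2*τ)*hq] at hm
  -- the interval in Wb
  have hJb : Icc (31-20*τ) (10-7*τ) ⊆ Wb := by
    intro u hu
    have h1τ : (0:ℝ) ≤ τ+1 := by linarith
    have hz : (τ+1)*u + 2*τ ∈ Icc (11-7*τ) (3-2*τ) := by
      constructor
      · linarith [hq, mul_le_mul_of_nonneg_left hu.1 h1τ]
      · linarith [hq, mul_le_mul_of_nonneg_left hu.2 h1τ]
    have hm := P4 _ (hJ hz)
    rwa [show (2-τ)*((((τ+1)*u + 2*τ)) - 2*τ) = u from by linear_combination (-u)*hq] at hm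
  -- nonempty interiors
  have hintA : Ioo (11-7*τ) (3-2*τ) ⊆ interior Wa :=
    interior_maximal (Ioo_subset_Icc_self.trans hJ) isOpen_Ioo
  have hintB : Ioo (31-20*τ) (10-7*τ) ⊆ interior Wb :=
    interior_maximal (Ioo_subset_Icc_self.trans hJb) isOpen_Ioo
  have hpaint : (7 - (9/2)*τ) ∈ interior Wa := hintA ⟨by linarith, by linarith⟩
  have hpbint : (41/2 - (27/2)*τ) ∈ interior Wb := hintB ⟨by linarith, by linarith⟩
  set A' : Set ℝ := closure (interior Wa) with hA'def
  set B' : Set ℝ := closure (interior Wb) with hB'def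
  have hpa : (7 - (9/2)*τ) ∈ A' := subset_closure hpaint
  have hpb : (41/2 - (27/2)*τ) ∈ B' := subset_closure hpbint
  have hpaWa : (7 - (9/2)*τ) ∈ Wa := interior_subset hpaint
  have hpbWb : (41/2 - (27/2)*τ) ∈ Wb := interior_subset hpbint
  have hMpa : |7 - (9/2)*τ| ≤ M := by
    simpa [Real.norm_eq_abs] using hM _ (Or.inl hpaWa)
  have hMpb : |41/2 - (27/2)*τ| ≤ M := by
    simpa [Real.norm_eq_abs] using hM _ (Or.inr hpbWb)
  -- closure-of-interior is invariant under the pieces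
  have QA1 : ∀ v ∈ A', (2-τ)*v + 0 ∈ A' := by
    rw [hA'def]
    exact img_step hpos (fun w hw => by
      rw [show (2-τ)*w + 0 = (2-τ)*w from by ring]; exact P1 w hw)
  have QA2 : ∀ v ∈ A', (2-τ)*v + (1-τ) ∈ A' := by
    rw [hA'def]
    exact img_step hpos (fun w hw => by
      rw [show (2-τ)*w + (1-τ) = (2-τ)*(w-τ) from by linear_combination -hq]; exact P2 w hw)
  have QB3 : ∀ v ∈ B', (2-τ)*v + 1 ∈ A' := by
    rw [hA'def, hB'def]
    exact img_step hpos (fun w hw => by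
      rw [show (2-τ)*w + 1 = (2-τ)*(w+τ^2) from by linear_combination (τ-1)*hq]; exact P3 w hw)
  have QA4 : ∀ v ∈ A', (2-τ)*v + (2-2*τ) ∈ B' := by
    rw [hA'def, hB'def]
    exact img_step hpos (fun w hw => by
      rw [show (2-τ)*w + (2-2*τ) = (2-τ)*(w-2*τ) from by linear_combination (-2:ℝ)*hq]
      exact P4 w hw)
  have QB5 : ∀ v ∈ B', (2-τ)*v + 0 ∈ B' := by
    rw [hB'def]
    exact img_step hpos (fun w hw => by
      rw [show (2-τ)*w + 0 = (2-τ)*w from by ring]; exact P5 w hw)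
  -- second contraction estimate
  have key2 : ∀ n : ℕ, ∀ x : ℝ,
      (x ∈ Wa → EMetric.infEdist x A' ≤ (ENNReal.ofReal (2-τ))^n * ENNReal.ofReal (2*M+4)) ∧
      (x ∈ Wb → EMetric.infEdist x B' ≤ (ENNReal.ofReal (2-τ))^n * ENNReal.ofReal (2*M+4)) := by
    intro n
    induction n with
    | zero =>
      intro x
      constructor <;> intro hx
      · rw [pow_zero, one_mul]
        refine le_trans (EMetric.infEdist_le_edist_of_mem hpa) ?_
        rw [edist_dist, Real.dist_eq]
        apply ENNReal.ofReal_le_ofReal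
        have h1' := abs_le.mp hMpa
        have h2' := abs_le.mp (show |x| ≤ M by simpa [Real.norm_eq_abs] using hM x (Or.inl hx))
        rw [abs_le]; constructor <;> linarith
      · rw [pow_zero, one_mul]
        refine le_trans (EMetric.infEdist_le_edist_of_mem hpb) ?_
        rw [edist_dist, Real.dist_eq]
        apply ENNReal.ofReal_le_ofReal
        have h1' := abs_le.mp hMpb
        have h2' := abs_le.mp (show |x| ≤ M by simpa [Real.norm_eq_abs] using hM x (Or.inr hx))
        rw [abs_le]; constructor <;> linarith
    | succ n ih =>
      intro x
      constructor <;> intro hx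
      · rw [h1] at hx
        simp only [Set.mem_union, Set.mem_image] at hx
        rcases hx with (⟨w, hw, hxw⟩ | ⟨w, hw, hxw⟩) | ⟨w, hw, hxw⟩
        · calc EMetric.infEdist x A'
              ≤ ENNReal.ofReal (2-τ) * EMetric.infEdist w A' :=
                scale_step hpos QA1 (by rw [← hxw]; ring)
            _ ≤ ENNReal.ofReal (2-τ) * ((ENNReal.ofReal (2-τ))^n * ENNReal.ofReal (2*M+4)) :=
                mul_le_mul_right ((ih w).1 hw) _
            _ = (ENNReal.ofReal (2-τ))^(n+1) * ENNReal.ofReal (2*M+4) := by rw [pow_succ]; ring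
        · calc EMetric.infEdist x A'
              ≤ ENNReal.ofReal (2-τ) * EMetric.infEdist w A' :=
                scale_step hpos QA2 (by rw [← hxw]; linear_combination hq)
            _ ≤ ENNReal.ofReal (2-τ) * ((ENNReal.ofReal (2-τ))^n * ENNReal.ofReal (2*M+4)) :=
                mul_le_mul_right ((ih w).1 hw) _
            _ = (ENNReal.ofReal (2-τ))^(n+1) * ENNReal.ofReal (2*M+4) := by rw [pow_succ]; ring
        · calc EMetric.infEdist x A'
              ≤ ENNReal.ofReal (2-τ) * EMetric.infEdist w B' :=
                scale_step hpos QB3 (by rw [← hxw]; linear_combination (1-τ)*hq)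
            _ ≤ ENNReal.ofReal (2-τ) * ((ENNReal.ofReal (2-τ))^n * ENNReal.ofReal (2*M+4)) :=
                mul_le_mul_right ((ih w).2 hw) _
            _ = (ENNReal.ofReal (2-τ))^(n+1) * ENNReal.ofReal (2*M+4) := by rw [pow_succ]; ring
      · rw [h2] at hx
        simp only [Set.mem_union, Set.mem_image] at hx
        rcases hx with ⟨w, hw, hxw⟩ | ⟨w, hw, hxw⟩
        · calc EMetric.infEdist x B'
              ≤ ENNReal.ofReal (2-τ) * EMetric.infEdist w A' :=
                scale_step hpos QA4 (by rw [← hxw]; linear_combination 2*hq)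
            _ ≤ ENNReal.ofReal (2-τ) * ((ENNReal.ofReal (2-τ))^n * ENNReal.ofReal (2*M+4)) :=
                mul_le_mul_right ((ih w).1 hw) _
            _ = (ENNReal.ofReal (2-τ))^(n+1) * ENNReal.ofReal (2*M+4) := by rw [pow_succ]; ring
        · calc EMetric.infEdist x B'
              ≤ ENNReal.ofReal (2-τ) * EMetric.infEdist w B' :=
                scale_step hpos QB5 (by rw [← hxw]; ring)
            _ ≤ ENNReal.ofReal (2-τ) * ((ENNReal.ofReal (2-τ))^n * ENNReal.ofReal (2*M+4)) :=
                mul_le_mul_right ((ih w).2 hw) _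
            _ = (ENNReal.ofReal (2-τ))^(n+1) * ENNReal.ofReal (2*M+4) := by rw [pow_succ]; ring
  -- conclude regularity
  have regA : closure (interior Wa) = Wa := by
    refine subset_antisymm (closure_minimal interior_subset hca.isClosed) (fun x hx => ?_)
    exact mem_of_le_geom isClosed_closure hL1 hCC (fun n => (key2 n x).1 hx)
  have regB : closure (interior Wb) = Wb := by
    refine subset_antisymm (closure_minimal interior_subset hcb.isClosed) (fun x hx => ?_)
    exact mem_of_le_geom isClosed_closure hL1 hCC (fun n => (key2 n x).2 hx)
  exact ⟨regA, regB, perfect_of_reg hca.isClosed regA, perfect_of_reg hcb.isClosed regB⟩
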